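/- With ℓ, t, γ, j, k, r, n and S = S⁺ ∪ S⁻ ⊆ ℤ_n chosen as in the construction, the set S is symmetric, (ℓS) ∩ S = ∅, and (ℓS) ∪ S = ℤ_n; that is, S is a symmetric complete (ℓ,1)-sum-free set in ℤ_n. -/

import Mathlib

/-- The `m`-fold sumset of `S`: all sums of `m` (not necessarily distinct) elements of `S`. -/
def sumset {Γ : Type*} [AddCommMonoid Γ] (m : ℕ) (S : Set Γ) : Set Γ :=
  {x | ∃ f : Fin m → Γ, (∀ i, f i ∈ S) ∧ ∑ i, f i = x}

/-- The set `S⁺ = I₁ ∪ I₂ ∪ I₃ ⊆ ℤ_n` from the construction, where `j = 2γ + 1`: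
`I₁ = {2θ+1 : 0 ≤ θ ≤ k+γ-2t-4}`, `I₂ = {2k+j-2(2t+4)+2θ : 2 ≤ θ ≤ t+2}`, `I₃ = {2k+j}`. -/
def Splus (n t k : ℕ) (γ : ℤ) : Set (ZMod n) :=
  {x | ∃ θ : ℤ, 0 ≤ θ ∧ θ ≤ (k : ℤ) + γ - 2 * t - 4 ∧ x = ((2 * θ + 1 : ℤ) : ZMod n)} ∪
  {x | ∃ θ : ℤ, 2 ≤ θ ∧ θ ≤ (t : ℤ) + 2 ∧
      x = ((2 * (k : ℤ) + (2 * γ + 1) - 2 * (2 * (t : ℤ) + 4) + 2 * θ : ℤ) : ZMod n)} ∪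
  {((2 * (k : ℤ) + (2 * γ + 1) : ℤ) : ZMod n)}

/-- The set `S⁻ = {n - s : s ∈ S⁺} ⊆ ℤ_n` from the construction. -/
def Sminus (n t k : ℕ) (γ : ℤ) : Set (ZMod n) := (fun s => -s) '' Splus n t k γ

/-- Integer version of `S⁺`. -/
def PInt (t k : ℕ) (γ : ℤ) : Set ℤ :=
  {p | p % 2 = 1 ∧ 1 ≤ p ∧
    (2*(k:ℤ)+2*γ+1 - p = 0 ∨
     (2*(t:ℤ)+4 ≤ 2*(k:ℤ)+2*γ+1 - p ∧ 2*(k:ℤ)+2*γ+1 - p ≤ 4*(t:ℤ)+4) ∨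
     4*(t:ℤ)+8 ≤ 2*(k:ℤ)+2*γ+1 - p)}

/-- Integer version of `S = S⁺ ∪ S⁻`. -/
def QInt (t k : ℕ) (γ : ℤ) : Set ℤ := {p | p ∈ PInt t k γ ∨ -p ∈ PInt t k γ}

lemma splus_eq (n t k : ℕ) (γ : ℤ) (hK : 2*(t:ℤ)+2 ≤ (k:ℤ)+γ) :
    Splus n t k γ = (fun z : ℤ => (z : ZMod n)) '' PInt t k γ := by
  ext x
  simp only [Splus, PInt, Set.mem_union, Set.mem_setOf_eq, Set.mem_image,
    Set.mem_singleton_iff]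
  constructor
  · rintro ((⟨θ, h0, h1, rfl⟩ | ⟨θ, h0, h1, rfl⟩) | rfl)
    · exact ⟨2*θ+1, ⟨by omega, by omega, by omega⟩, rfl⟩
    · exact ⟨2*(k:ℤ) + (2*γ+1) - 2*(2*(t:ℤ)+4) + 2*θ, ⟨by omega, by omega, by omega⟩, rfl⟩
    · exact ⟨2*(k:ℤ) + (2*γ+1), ⟨by omega, by omega, by omega⟩, rfl⟩
  · rintro ⟨p, ⟨hp2, hp1, (hc | hc | hc)⟩, rfl⟩
    · right
      rw [show p = 2*(k:ℤ) + (2*γ+1) by omega]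
    · left; right
      obtain ⟨c, hcc⟩ : ∃ c : ℤ, p = 2*c+1 := ⟨(p-1)/2, by omega⟩
      refine ⟨c - ((k:ℤ) + γ - 2*t - 4), by omega, by omega, ?_⟩
      rw [show 2*(k:ℤ) + (2*γ+1) - 2*(2*(t:ℤ)+4) + 2*(c - ((k:ℤ) + γ - 2*t - 4)) = p by omega]
    · left; left
      obtain ⟨c, hcc⟩ : ∃ c : ℤ, p = 2*c+1 := ⟨(p-1)/2, by omega⟩
      exact ⟨c, by omega, by omega, by rw [show 2*c+1 = p by omega]⟩

lemma union_eq (n t k : ℕ) (γ : ℤ) (hK : 2*(t:ℤ)+2 ≤ (k:ℤ)+γ) :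
    Splus n t k γ ∪ Sminus n t k γ = (fun z : ℤ => (z : ZMod n)) '' QInt t k γ := by
  rw [Sminus, splus_eq n t k γ hK]
  ext x
  constructor
  · rintro (⟨p, hp, rfl⟩ | ⟨y, ⟨p, hp, rfl⟩, rfl⟩)
    · exact ⟨p, Or.inl hp, rfl⟩
    · exact ⟨-p, Or.inr (by simpa using hp), by push_cast; ring⟩
  · rintro ⟨p, hp | hp, rfl⟩
    · exact Or.inl ⟨p, hp, rfl⟩
    · exact Or.inr ⟨((-p : ℤ) : ZMod n), ⟨-p, hp, rfl⟩, by push_cast; ring⟩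

lemma mem_sumset_image {n : ℕ} (L : ℕ) (Q : Set ℤ) (x : ZMod n) :
    x ∈ sumset L ((fun z : ℤ => (z : ZMod n)) '' Q) ↔
    ∃ g : Fin L → ℤ, (∀ i, g i ∈ Q) ∧ ((∑ i, g i : ℤ) : ZMod n) = x := by
  constructor
  · rintro ⟨f, hf, rfl⟩
    choose g hg hcast using hf
    refine ⟨g, hg, ?_⟩
    push_cast
    exact Finset.sum_congr rfl fun i _ => hcast i
  · rintro ⟨g, hg, rfl⟩
    exact ⟨fun i => ((g i : ℤ) : ZMod n), fun i => ⟨g i, hg i, rfl⟩, by push_cast; rfl⟩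

lemma odd_interval_sum (m : ℤ) (hm2 : m % 2 = 1) (hm1 : 1 ≤ m) :
    ∀ (L : ℕ) (z : ℤ), z % 2 = (L : ℤ) % 2 → -((L:ℤ)*m) ≤ z → z ≤ (L:ℤ)*m →
    ∃ f : Fin L → ℤ, (∀ i, f i % 2 = 1 ∧ -m ≤ f i ∧ f i ≤ m) ∧ ∑ i, f i = z := by
  intro L
  induction L with
  | zero =>
    intro z h1 h2 h3
    refine ⟨fun i => i.elim0, fun i => i.elim0, ?_⟩
    simp only [Nat.cast_zero, zero_mul] at h2 h3
    simp only [Finset.univ_eq_empty, Finset.sum_empty]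
    omega
  | succ L ih =>
    intro z hpar hlo hhi
    have hcast : ((L+1 : ℕ):ℤ)*m = (L:ℤ)*m + m := by push_cast; ring
    rw [hcast] at hlo hhi
    have hnn : 0 ≤ (L:ℤ)*m := by positivity
    have hparz : z % 2 = ((L:ℤ)+1) % 2 := by push_cast at hpar; omega
    obtain ⟨a, ha1, ha2, ha3, ha4, ha5⟩ :
        ∃ a : ℤ, a % 2 = 1 ∧ -m ≤ a ∧ a ≤ m ∧ -((L:ℤ)*m) ≤ z - a ∧ z - a ≤ (L:ℤ)*m := by
      rcases le_or_gt m z with h1 | h1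
      · exact ⟨m, hm2, by omega, le_refl _, by linarith, by linarith⟩
      rcases le_or_gt z (-m) with h2 | h2
      · exact ⟨-m, by omega, by omega, by omega, by linarith, by linarith⟩
      rcases Int.emod_two_eq z with h3 | h3
      · have hL1 : 1 ≤ (L:ℤ) := by omega
        have hm' : m ≤ (L:ℤ)*m := by nlinarith
        exact ⟨z+1, by omega, by omega, by omega, by linarith, by linarith⟩
      · exact ⟨z, h3, by omega, by omega, by linarith, by linarith⟩
    obtain ⟨f, hf, hsum⟩ := ih (z - a) (by omega) ha4 ha5
    refine ⟨Fin.cons a f, fun i => ?_, ?_⟩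
    · refine Fin.cases ?_ (fun j => ?_) i
      · exact ⟨ha1, ha2, ha3⟩
      · simpa using hf j
    · rw [Fin.sum_cons, hsum]; ring

lemma gap_sum (a b : ℤ) (ha1 : 1 ≤ a) (hab : a ≤ b) (hchain : 2*a ≤ b + 2)
    (ha2 : a % 2 = 0) (hb2 : b % 2 = 0) :
    ∀ (L : ℕ) (d : ℤ), d % 2 = 0 → a ≤ d → d ≤ (L:ℤ)*b →
    ∃ f : Fin L → ℤ, (∀ i, f i = 0 ∨ (f i % 2 = 0 ∧ a ≤ f i ∧ f i ≤ b)) ∧ ∑ i, f i = d := by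
  intro L
  induction L with
  | zero =>
    intro d h1 h2 h3
    exfalso
    simp only [Nat.cast_zero, zero_mul] at h3
    omega
  | succ L ih =>
    intro d hd2 hda hdb
    have hcast : ((L+1 : ℕ):ℤ)*b = (L:ℤ)*b + b := by push_cast; ring
    rw [hcast] at hdb
    rcases Nat.eq_zero_or_pos L with rfl | hL
    · refine ⟨fun _ => d, fun i => Or.inr ⟨hd2, hda, ?_⟩, by simp⟩
      simp only [Nat.cast_zero, zero_mul] at hdb
      show d ≤ b
      omega
    · have hb0 : 0 ≤ b := by omega
      have hL1 : 1 ≤ (L:ℤ) := by exact_mod_cast hL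
      have hLb1 : b ≤ (L:ℤ)*b := by nlinarith
      rcases le_or_gt d ((L:ℤ)*b) with h | h
      · obtain ⟨f, hf, hsum⟩ := ih d hd2 hda h
        refine ⟨Fin.cons 0 f, fun i => ?_, ?_⟩
        · refine Fin.cases (Or.inl rfl) (fun j => by simpa using hf j) i
        · rw [Fin.sum_cons, hsum, zero_add]
      · have hd2a : 2*a ≤ d := by
          have h1 : b + 1 ≤ d := by linarith
          omega
        rcases le_or_gt (d - a) b with hc | hc
        · obtain ⟨f, hf, hsum⟩ := ih a ha2 le_rfl (by linarith)
          refine ⟨Fin.cons (d - a) f, fun i => ?_, ?_⟩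
          · refine Fin.cases ?_ (fun j => by simpa using hf j) i
            rw [Fin.cons_zero]
            exact Or.inr ⟨by omega, by omega, hc⟩
          · rw [Fin.sum_cons, hsum]; ring
        · obtain ⟨f, hf, hsum⟩ := ih (d - b) (by omega) (by linarith) (by linarith)
          refine ⟨Fin.cons b f, fun i => ?_, ?_⟩
          · refine Fin.cases (Or.inr ⟨hb2, hab, le_rfl⟩) (fun j => by simpa using hf j) i
          · rw [Fin.sum_cons, hsum]; ring

lemma single_sum : ∀ (L : ℕ), 1 ≤ L → ∀ (c : ℤ),
    ∃ f : Fin L → ℤ, (∀ i, f i = 0 ∨ f i = c) ∧ ∑ i, f i = c := by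
  intro L
  induction L with
  | zero => omega
  | succ L _ =>
    intro _ c
    refine ⟨Fin.cons c (fun _ => 0), fun i => ?_, ?_⟩
    · refine Fin.cases (Or.inr rfl) (fun j => Or.inl rfl) i
    · rw [Fin.sum_cons]
      simp

set_option maxHeartbeats 2000000 in
theorem stmt3 (ℓ t k n : ℕ) (γ : ℤ)
    (hℓe : Even ℓ) (hℓ : 4 ≤ ℓ) (ht : 1 ≤ t)
    (hγ1 : 1 ≤ (ℓ : ℤ) + 3 - 4 * ((t : ℤ) + 2) + γ * (2 * (ℓ : ℤ) + 2))
    (hγ2 : (ℓ : ℤ) + 3 - 4 * ((t : ℤ) + 2) + γ * (2 * (ℓ : ℤ) + 2) ≤ 2 * (ℓ : ℤ) + 2)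
    (hk : 4 * (t : ℤ) + 2 * (ℓ : ℤ) + 2 * |γ| + 2 ≤ (k : ℤ))
    (hn : (n : ℤ) = (2 * (ℓ : ℤ) + 2) * (k : ℤ) +
      ((ℓ : ℤ) + 3 - 4 * ((t : ℤ) + 2) + γ * (2 * (ℓ : ℤ) + 2))) :
    (∀ s ∈ Splus n t k γ ∪ Sminus n t k γ, -s ∈ Splus n t k γ ∪ Sminus n t k γ) ∧
    sumset ℓ (Splus n t k γ ∪ Sminus n t k γ) ∩ (Splus n t k γ ∪ Sminus n t k γ) = ∅ ∧
    sumset ℓ (Splus n t k γ ∪ Sminus n t k γ) ∪ (Splus n t k γ ∪ Sminus n t k γ) = Set.univ := by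
  have habs1 : -|γ| ≤ γ := neg_abs_le γ
  have habs2 : γ ≤ |γ| := le_abs_self γ
  have habs0 : 0 ≤ |γ| := abs_nonneg γ
  have hℓ2 : (ℓ:ℤ) % 2 = 0 := by obtain ⟨c, hc⟩ := hℓe; omega
  have hℓ4 : (4:ℤ) ≤ (ℓ:ℤ) := by exact_mod_cast hℓ
  have ht1 : (1:ℤ) ≤ (t:ℤ) := by exact_mod_cast ht
  have hK : 4*(t:ℤ) + 2*(ℓ:ℤ) + 2 ≤ (k:ℤ) + γ := by linarith
  set M : ℤ := 2*(k:ℤ) + 2*γ + 1 with hMdef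
  have hModd : M % 2 = 1 := by omega
  have hM1 : 8*(t:ℤ) + 4*(ℓ:ℤ) + 5 ≤ M := by omega
  have hnM : (n:ℤ) = (ℓ:ℤ)*M + M - (4*(t:ℤ)+6) := by rw [hMdef]; linear_combination hn
  have hM0 : (0:ℤ) ≤ M := by omega
  have hℓM0 : 0 ≤ (ℓ:ℤ)*M := mul_nonneg (by positivity) hM0
  have hMl : 4*(t:ℤ)+8 ≤ (ℓ:ℤ)*M := by
    have h4 : 4*M ≤ (ℓ:ℤ)*M := mul_le_mul_of_nonneg_right hℓ4 hM0
    linarith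
  have hn0 : 0 < (n:ℤ) := by linarith
  have hn2 : (n:ℤ) % 2 = 1 := by
    obtain ⟨c, hc⟩ := hℓe
    have hcm : (ℓ:ℤ)*M = 2*((c:ℤ)*M) := by
      have : (ℓ:ℤ) = 2*(c:ℤ) := by push_cast [hc]; ring
      rw [this]; ring
    omega
  haveI : NeZero n := ⟨by omega⟩
  have hK' : 2*(t:ℤ)+2 ≤ (k:ℤ)+γ := by linarith
  have hSQ := union_eq n t k γ hK'
  have hQfacts : ∀ p ∈ QInt t k γ, p % 2 = 1 ∧ -M ≤ p ∧ p ≤ M ∧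
      (M - p = 0 ∨ (2*(t:ℤ)+4 ≤ M - p ∧ M - p ≤ 4*(t:ℤ)+4) ∨ 4*(t:ℤ)+8 ≤ M - p) := by
    rintro p (hp | hp) <;> obtain ⟨h1, h2, h3⟩ := hp <;>
      exact ⟨by omega, by omega, by omega, by omega⟩
  have hsymm : ∀ s ∈ Splus n t k γ ∪ Sminus n t k γ, -s ∈ Splus n t k γ ∪ Sminus n t k γ := by
    rintro s (h | ⟨y, hy, rfl⟩)
    · exact Or.inr ⟨s, h, rfl⟩
    · exact Or.inl (by simpa using hy)
  have key : ∀ (g : Fin ℓ → ℤ) (s : ℤ), (∀ i, g i ∈ QInt t k γ) → s ∈ QInt t k γ →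
      ∑ i, g i - s ≠ (n:ℤ) := by
    intro g s hg hs heq
    have hsum_def : ∑ i, (M - g i) = (ℓ:ℤ)*M - ∑ i, g i := by
      rw [Finset.sum_sub_distrib, Finset.sum_const, Finset.card_univ, Fintype.card_fin,
        nsmul_eq_mul]
    obtain ⟨d, hdd⟩ : ∃ d : ℤ, d = (ℓ:ℤ)*M - ∑ i, g i := ⟨_, rfl⟩
    have hd0 : (0:ℤ) ≤ d := by
      rw [hdd, ← hsum_def]
      exact Finset.sum_nonneg fun i _ => by
        show (0:ℤ) ≤ M - g i; linarith [(hQfacts _ (hg i)).2.2.1]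
    obtain ⟨hs1, hs2, hs3, hs4⟩ := hQfacts s hs
    have hsP : -s ∈ PInt t k γ := by
      rcases hs with h | h
      · exfalso
        have h1 : 1 ≤ s := h.2.1
        linarith [heq, hd0, hdd, hnM, hM1, hℓ4, ht1]
      · exact h
    obtain ⟨hq1, hq2, hq3⟩ := hsP
    have hdval : d = 4*(t:ℤ)+6 - (M + s) := by rw [hdd]; linarith [heq, hnM]
    by_cases hall : ∀ i, M - g i = 0
    · have hdz : d = 0 := by
        rw [hdd, ← hsum_def]
        exact Finset.sum_eq_zero fun i _ => hall i
      omega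
    · push_neg at hall
      obtain ⟨i₀, hi₀⟩ := hall
      have hti₀ : 2*(t:ℤ)+4 ≤ M - g i₀ := by
        rcases (hQfacts _ (hg i₀)).2.2.2 with h | h | h <;> omega
      have hsingle : ∀ j, j ≠ i₀ → M - g j = 0 := by
        intro jj hj
        by_contra hj0
        have htj : 2*(t:ℤ)+4 ≤ M - g jj := by
          rcases (hQfacts _ (hg jj)).2.2.2 with h | h | h <;> omega
        have h2 : M - g jj ≤ ∑ i ∈ Finset.univ.erase i₀, (M - g i) :=
          Finset.single_le_sum (f := fun i => M - g i)
            (fun i _ => by show (0:ℤ) ≤ M - g i; linarith [(hQfacts _ (hg i)).2.2.1])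
            (Finset.mem_erase.mpr ⟨hj, Finset.mem_univ jj⟩)
        have h3 := Finset.add_sum_erase Finset.univ (fun i => M - g i) (Finset.mem_univ i₀)
        rw [hsum_def] at h3
        have h3' : M - g i₀ + ∑ i ∈ Finset.univ.erase i₀, (M - g i)
            = (ℓ:ℤ)*M - ∑ i, g i := h3
        have h4 : 4*(t:ℤ)+8 ≤ d := by rw [hdd]; linarith
        omega
      have hdi : d = M - g i₀ := by
        rw [hdd, ← hsum_def]
        exact Finset.sum_eq_single_of_mem i₀ (Finset.mem_univ _) fun j _ hj => hsingle j hj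
      rcases (hQfacts _ (hg i₀)).2.2.2 with h | h | h <;> omega
  refine ⟨hsymm, ?_, ?_⟩
  · rw [Set.eq_empty_iff_forall_notMem]
    rintro x ⟨hx1, hx2⟩
    rw [hSQ] at hx1 hx2
    rw [mem_sumset_image] at hx1
    obtain ⟨g, hg, hgx⟩ := hx1
    obtain ⟨s, hs, hsx⟩ := hx2
    have hcast : ((∑ i, g i : ℤ) : ZMod n) = ((s:ℤ) : ZMod n) := by
      rw [hgx]; exact hsx.symm
    have hdvd : (n:ℤ) ∣ s - ∑ i, g i := ((ZMod.intCast_eq_intCast_iff _ _ _).mp hcast).dvd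
    obtain ⟨c, hc⟩ := hdvd
    obtain ⟨hs1, hs2, hs3, hs4⟩ := hQfacts s hs
    have hgb : ∀ i, -M ≤ g i ∧ g i ≤ M :=
      fun i => ⟨(hQfacts _ (hg i)).2.1, (hQfacts _ (hg i)).2.2.1⟩
    have hconst : (∑ _i : Fin ℓ, M) = (ℓ:ℤ)*M := by
      rw [Finset.sum_const, Finset.card_univ, Fintype.card_fin, nsmul_eq_mul]
    have hzb1 : ∑ i, g i ≤ (ℓ:ℤ)*M := by
      calc ∑ i, g i ≤ ∑ _i : Fin ℓ, M := Finset.sum_le_sum fun i _ => (hgb i).2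
      _ = (ℓ:ℤ)*M := hconst
    have hzb2 : -((ℓ:ℤ)*M) ≤ ∑ i, g i := by
      have h1 : (∑ _i : Fin ℓ, (-M)) ≤ ∑ i, g i := Finset.sum_le_sum fun i _ => (hgb i).1
      have h2 : (∑ _i : Fin ℓ, (-M)) = -((ℓ:ℤ)*M) := by
        rw [Finset.sum_const, Finset.card_univ, Fintype.card_fin, nsmul_eq_mul]; ring
      linarith
    have hub : s - ∑ i, g i < 2*(n:ℤ) := by linarith
    have hlb : -(2*(n:ℤ)) < s - ∑ i, g i := by linarith
    have hc1 : c ≤ 1 := by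
      by_contra hcc
      push_neg at hcc
      have h2 : (n:ℤ)*2 ≤ (n:ℤ)*c := mul_le_mul_of_nonneg_left (by omega) hn0.le
      linarith
    have hcm1 : -1 ≤ c := by
      by_contra hcc
      push_neg at hcc
      have h2 : (n:ℤ)*c ≤ (n:ℤ)*(-2) := mul_le_mul_of_nonneg_left (by omega) hn0.le
      have h3 : (n:ℤ)*(-2) = -(2*(n:ℤ)) := by ring
      linarith
    interval_cases c
    · exact key g s hg hs (by linarith)
    · have hpar : (∑ i, g i) % 2 = 0 := by
        have h1 : (∑ i, g i) % 2 = (∑ i, (g i % 2)) % 2 := Finset.sum_int_mod _ 2 _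
        have h2 : ∑ i, (g i % 2) = ∑ _i : Fin ℓ, (1:ℤ) :=
          Finset.sum_congr rfl fun i _ => (hQfacts _ (hg i)).1
        have h3 : (∑ _i : Fin ℓ, (1:ℤ)) = (ℓ:ℤ) := by
          rw [Finset.sum_const, Finset.card_univ, Fintype.card_fin, nsmul_eq_mul, mul_one]
        rw [h1, h2, h3]
        omega
      omega
    · refine key (fun i => -(g i)) (-s) (fun i => ?_) ?_ ?_
      · rcases hg i with h | h
        · exact Or.inr (by simpa using h)
        · exact Or.inl h
      · rcases hs with h | h
        · exact Or.inr (by simpa using h)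
        · exact Or.inl h
      · rw [Finset.sum_neg_distrib]; linarith
  · rw [Set.eq_univ_iff_forall]
    have hsum_neg : ∀ y : ZMod n, y ∈ sumset ℓ (Splus n t k γ ∪ Sminus n t k γ) →
        -y ∈ sumset ℓ (Splus n t k γ ∪ Sminus n t k γ) := by
      rintro y ⟨f, hf, rfl⟩
      exact ⟨fun i => -(f i), fun i => hsymm _ (hf i), Finset.sum_neg_distrib _⟩
    have main : ∀ w : ℤ, 0 ≤ w → w < (n:ℤ) → w % 2 = 0 →
        ((w : ZMod n) ∈ sumset ℓ (Splus n t k γ ∪ Sminus n t k γ) ∪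
          (Splus n t k γ ∪ Sminus n t k γ)) := by
      intro w hw0 hwn hw2
      by_cases hcase : w ≤ (ℓ:ℤ) * (M - (4*(t:ℤ)+8))
      · left
        have hm₁ : 0 ≤ (ℓ:ℤ) * (M - (4*(t:ℤ)+8)) := mul_nonneg (by positivity) (by omega)
        obtain ⟨f, hf, hsum⟩ := odd_interval_sum (M - (4*(t:ℤ)+8)) (by omega) (by omega) ℓ w
          (by omega) (by linarith) hcase
        rw [hSQ, mem_sumset_image]
        refine ⟨f, fun i => ?_, by rw [hsum]⟩
        obtain ⟨h1, h2, h3⟩ := hf i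
        rcases le_or_gt 1 (f i) with h | h
        · exact Or.inl ⟨h1, h, Or.inr (Or.inr (by omega))⟩
        · exact Or.inr ⟨by omega, by omega, Or.inr (Or.inr (by omega))⟩
      · push_neg at hcase
        have hq2 : ((n:ℤ) - w) % 2 = 1 := by omega
        have hq1 : 1 ≤ (n:ℤ) - w := by omega
        have hexp : (ℓ:ℤ)*(M - (4*(t:ℤ)+8)) = (ℓ:ℤ)*M - (ℓ:ℤ)*(4*(t:ℤ)+8) := by ring
        have hqlt : (n:ℤ) - w < M - (4*(t:ℤ)+6) + (ℓ:ℤ)*(4*(t:ℤ)+8) := by linarith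
        by_cases hqP : (n:ℤ) - w ∈ PInt t k γ
        · right
          rw [hSQ]
          refine ⟨-((n:ℤ) - w), Or.inr (by simpa using hqP), ?_⟩
          show ((-((n:ℤ) - w) : ℤ) : ZMod n) = ((w : ℤ) : ZMod n)
          have h3 : (((n:ℕ):ℤ) : ZMod n) = 0 := by push_cast; simp
          have h4 : (-((n:ℤ) - w)) = w - (n:ℤ) := by ring
          rw [h4, Int.cast_sub, h3, sub_zero]
        · left
          have hqge : M - (4*(t:ℤ)+6) ≤ (n:ℤ) - w := by
            by_contra hq
            push_neg at hq
            exact hqP ⟨hq2, hq1, Or.inr (Or.inr (by omega))⟩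
          have hnotP : ¬(2*(k:ℤ)+2*γ+1 - ((n:ℤ)-w) = 0 ∨
              (2*(t:ℤ)+4 ≤ 2*(k:ℤ)+2*γ+1 - ((n:ℤ)-w) ∧
                2*(k:ℤ)+2*γ+1 - ((n:ℤ)-w) ≤ 4*(t:ℤ)+4) ∨
              4*(t:ℤ)+8 ≤ 2*(k:ℤ)+2*γ+1 - ((n:ℤ)-w)) := fun h => hqP ⟨hq2, hq1, h⟩
          obtain ⟨d, hdd⟩ : ∃ d : ℤ, d = (n:ℤ) - w - M + (4*(t:ℤ)+6) := ⟨_, rfl⟩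
          have hd0 : 0 ≤ d := by omega
          have hd2 : d % 2 = 0 := by omega
          have hdcases : d = 0 ∨ (2*(t:ℤ)+4 ≤ d ∧ d ≤ 4*(t:ℤ)+4) ∨ 4*(t:ℤ)+8 ≤ d := by omega
          have hdub : d < (ℓ:ℤ)*(4*(t:ℤ)+8) := by rw [hdd]; linarith
          obtain ⟨tt, htt, httsum⟩ : ∃ tt : Fin ℓ → ℤ,
              (∀ i, tt i = 0 ∨ (tt i % 2 = 0 ∧ 2*(t:ℤ)+4 ≤ tt i ∧ tt i ≤ M - 1 ∧
                (tt i ≤ 4*(t:ℤ)+4 ∨ 4*(t:ℤ)+8 ≤ tt i))) ∧ ∑ i, tt i = d := by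
            rcases hdcases with h | h | h
            · exact ⟨fun _ => 0, fun i => Or.inl rfl, by simpa using h.symm⟩
            · obtain ⟨f, hf, hfs⟩ := single_sum ℓ (by omega) d
              refine ⟨f, fun i => ?_, hfs⟩
              rcases hf i with hh | hh
              · exact Or.inl hh
              · rw [hh]
                exact Or.inr ⟨hd2, h.1, by omega, Or.inl h.2⟩
            · have h48 : (ℓ:ℤ)*(4*(t:ℤ)+8) ≤ (ℓ:ℤ)*(M-1) :=
                mul_le_mul_of_nonneg_left (by omega) (by positivity)
              obtain ⟨f, hf, hs⟩ := gap_sum (4*(t:ℤ)+8) (M-1) (by omega) (by omega) (by omega)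
                (by omega) (by omega) ℓ d hd2 h (by linarith)
              exact ⟨f, fun i => (hf i).imp id (fun hh => ⟨hh.1, by omega, hh.2.2,
                Or.inr hh.2.1⟩), hs⟩
          rw [hSQ, mem_sumset_image]
          refine ⟨fun i => M - tt i, fun i => ?_, ?_⟩
          · show M - tt i ∈ QInt t k γ
            refine Or.inl ?_
            rcases htt i with h | ⟨h1, h2, h3, h4⟩
            · rw [h]
              exact ⟨by omega, by omega, Or.inl (by omega)⟩
            · rcases h4 with h4 | h4
              · exact ⟨by omega, by omega, Or.inr (Or.inl (by omega))⟩
              · exact ⟨by omega, by omega, Or.inr (Or.inr (by omega))⟩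
          · show ((∑ i, (M - tt i) : ℤ) : ZMod n) = ((w : ℤ) : ZMod n)
            have hsumeq : ∑ i, (M - tt i) = (ℓ:ℤ)*M - d := by
              rw [Finset.sum_sub_distrib, httsum, Finset.sum_const, Finset.card_univ,
                Fintype.card_fin, nsmul_eq_mul]
            rw [hsumeq, show (ℓ:ℤ)*M - d = w from by rw [hdd]; linarith]
    intro x
    have hx : (((x.val : ℤ)) : ZMod n) = x := by push_cast; exact ZMod.natCast_rightInverse x
    have hxlt : ((x.val : ℕ) : ℤ) < (n:ℤ) := by exact_mod_cast ZMod.val_lt x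
    have hx0 : (0:ℤ) ≤ (x.val : ℤ) := by positivity
    rcases Int.emod_two_eq (x.val : ℤ) with hpar | hpar
    · rw [← hx]; exact main _ hx0 hxlt hpar
    · have h1 : (1:ℤ) ≤ (x.val:ℤ) := by omega
      have h2 := main ((n:ℤ) - (x.val:ℤ)) (by omega) (by omega) (by omega)
      have h3 : (((n:ℕ):ℤ) : ZMod n) = 0 := by push_cast; simp
      have hneg : (((n:ℤ) - (x.val:ℤ) : ℤ) : ZMod n) = -x := by
        rw [Int.cast_sub, h3, hx, zero_sub]
      rw [hneg] at h2
      rcases h2 with h2 | h2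
      · left
        have := hsum_neg _ h2
        simpa using this
      · right
        have := hsymm _ h2
        simpa using this
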